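/- Fix integers n ≥ 1 and ℓ₀ with 1 ≤ ℓ₀ ≤ n. Define a step distribution step : ℕ → PMF ℕ by letting step(ℓ) be the law of the random variable (B if B ≥ 1, else ℓ), where B is binomial with ℓ trials and success probability 1/2; i.e., step(ℓ) is the pushforward of the binomial(ℓ, 1/2) distribution under b ↦ if b ≥ 1 then b else ℓ. Let μ_0 be the point mass at ℓ₀ and μ_{t+1} = μ_t.bind(step). Then for every t ∈ ℕ, μ_t({1}) ≥ 1 − n·(3/4)^t. In particular, for every c > 0 and every t ≥ (c+1)·ln n / ln(4/3), μ_t({1}) ≥ 1 − n^{−c}. -/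

import Mathlib

open scoped ENNReal

open Finset in
private lemma le3_sum_id_mul_choose (n : ℕ) :
    ∑ b ∈ range (n + 1), b * n.choose b = n * 2 ^ (n - 1) := by
  cases n with
  | zero => simp
  | succ m =>
    rw [Finset.sum_range_succ']
    simp only [zero_mul, add_zero]
    have h : ∀ i ∈ range (m + 1), (i + 1) * (m + 1).choose (i + 1) = (m + 1) * m.choose i := by
      intro i _
      rw [mul_comm, ← Nat.add_one_mul_choose_eq]
    rw [Finset.sum_congr rfl h, ← Finset.mul_sum, Nat.sum_range_choose]
    simp

open Finset in
private lemma le3_keyT (ℓ : ℕ) (hℓ : 1 ≤ ℓ) :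
    (∑ b ∈ range (ℓ + 1), ℓ.choose b * ((if 1 ≤ b then b else ℓ) - 1)) + 2 ^ ℓ
      = ℓ * 2 ^ (ℓ - 1) + ℓ := by
  have h2 : (2 : ℕ) ^ ℓ = ∑ b ∈ range (ℓ + 1), ℓ.choose b := (Nat.sum_range_choose ℓ).symm
  rw [h2, Finset.sum_range_succ', Finset.sum_range_succ']
  simp only [Nat.choose_zero_right, if_neg (by omega : ¬ 1 ≤ 0), one_mul]
  have h3 : ∀ i ∈ range ℓ,
      ℓ.choose (i + 1) * ((if 1 ≤ i + 1 then i + 1 else ℓ) - 1) = ℓ.choose (i + 1) * i := by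
    intro i _; rw [if_pos (by omega)]; simp
  rw [Finset.sum_congr rfl h3]
  have hs : ∑ i ∈ range ℓ, (i + 1) * ℓ.choose (i + 1) = ℓ * 2 ^ (ℓ - 1) := by
    rw [← le3_sum_id_mul_choose, Finset.sum_range_succ']
    simp
  have hsplit : ∑ i ∈ range ℓ, (i + 1) * ℓ.choose (i + 1)
      = (∑ i ∈ range ℓ, ℓ.choose (i + 1) * i) + ∑ i ∈ range ℓ, ℓ.choose (i + 1) := by
    rw [← Finset.sum_add_distrib]
    exact Finset.sum_congr rfl fun i _ => by ring
  omega

open Finset in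
private lemma le3_natBound (ℓ : ℕ) (hℓ : 1 ≤ ℓ) :
    4 * (∑ b ∈ range (ℓ + 1), ℓ.choose b * ((if 1 ≤ b then b else ℓ) - 1))
      ≤ 3 * ((ℓ - 1) * 2 ^ ℓ) := by
  have hT := le3_keyT ℓ hℓ
  have h2 : (2 : ℕ) ^ ℓ = 2 * 2 ^ (ℓ - 1) := by
    conv_lhs => rw [show ℓ = (ℓ - 1) + 1 from by omega]
    ring
  have hx : ℓ ≤ 2 ^ (ℓ - 1) := by
    have := (ℓ - 1).lt_two_pow_self; omega
  obtain ⟨k, rfl⟩ : ∃ k, ℓ = k + 1 := ⟨ℓ - 1, by omega⟩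
  set T := ∑ b ∈ range (k + 1 + 1), (k + 1).choose b * ((if 1 ≤ b then b else k + 1) - 1)
    with hTdef
  set x := 2 ^ (k + 1 - 1) with hxdef
  rw [h2] at hT ⊢
  simp only [Nat.add_sub_cancel] at *
  nlinarith [hT, hx, Nat.mul_le_mul_left (2 * k + 4) hx]

private lemma le3_tsum_map_mul {α : Type*} (p : PMF α) (f : α → ℕ) (g : ℕ → ℝ≥0∞) :
    ∑' m, (p.map f) m * g m = ∑' b, p b * g (f b) := by
  simp only [PMF.map_apply]
  refine (tsum_congr fun m => (ENNReal.tsum_mul_right).symm).trans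
    (ENNReal.tsum_comm.trans (tsum_congr fun a => ?_))
  rw [tsum_eq_single (f a)]
  · simp
  · intro m hm; simp [hm]

private lemma le3_tsum_bind_mul (μ : PMF ℕ) (st : ℕ → PMF ℕ) (g : ℕ → ℝ≥0∞) :
    ∑' m, (μ.bind st) m * g m = ∑' ℓ, μ ℓ * ∑' m, st ℓ m * g m := by
  simp only [PMF.bind_apply]
  refine (tsum_congr fun m => (ENNReal.tsum_mul_right).symm).trans
    (ENNReal.tsum_comm.trans (tsum_congr fun ℓ => ?_))
  simp_rw [mul_assoc]
  exact ENNReal.tsum_mul_left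

open Finset in
private lemma le3_stepBoundE (ℓ : ℕ) :
    ∑' b : Fin (ℓ + 1), (PMF.binomial (1/2) (by norm_num) ℓ) b *
      (((if 1 ≤ (b : ℕ) then (b : ℕ) else ℓ) - 1 : ℕ) : ℝ≥0∞)
      ≤ (3 / 4 : ℝ≥0∞) * ((ℓ - 1 : ℕ) : ℝ≥0∞) := by
  have hhalf : (1 : ℝ≥0∞) - 1/2 = 1/2 := by
    rw [one_div, ENNReal.sub_eq_of_eq_add (by norm_num)]
    rw [ENNReal.inv_two_add_inv_two]
  have hterm : ∀ b : Fin (ℓ + 1), (PMF.binomial (1/2) (by norm_num) ℓ) b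
      = (1/2 : ℝ≥0∞)^ℓ * (ℓ.choose (b : ℕ) : ℝ≥0∞) := by
    intro b
    have hc : ((1/2 : NNReal) : ℝ≥0∞) = 1/2 := (ENNReal.coe_div two_ne_zero).trans (by simp)
    rw [PMF.binomial_apply, hc, hhalf, Fin.val_last, ← pow_add,
      Nat.add_sub_cancel' (Nat.le_of_lt_succ b.isLt)]
  rw [tsum_fintype]
  have hsum : ∑ b : Fin (ℓ + 1), (PMF.binomial (1/2) (by norm_num) ℓ) b *
      (((if 1 ≤ (b : ℕ) then (b : ℕ) else ℓ) - 1 : ℕ) : ℝ≥0∞)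
      = (1/2 : ℝ≥0∞)^ℓ *
        ((∑ b ∈ range (ℓ + 1), ℓ.choose b * ((if 1 ≤ b then b else ℓ) - 1) : ℕ) : ℝ≥0∞) := by
    rw [Nat.cast_sum, Finset.mul_sum,
      ← Fin.sum_univ_eq_sum_range (fun b => (1/2 : ℝ≥0∞)^ℓ *
        ((ℓ.choose b * ((if 1 ≤ b then b else ℓ) - 1) : ℕ) : ℝ≥0∞)) (ℓ + 1)]
    refine Finset.sum_congr rfl fun b _ => ?_
    rw [hterm b]
    push_cast
    ring
  rw [hsum]
  rcases Nat.eq_zero_or_pos ℓ with rfl | hℓ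
  · simp
  have hnat := le3_natBound ℓ hℓ
  set S : ℝ≥0∞ := ((∑ b ∈ range (ℓ + 1), ℓ.choose b * ((if 1 ≤ b then b else ℓ) - 1) : ℕ) : ℝ≥0∞)
    with hSdef
  have h4S : (4 : ℝ≥0∞) * S ≤ 3 * (((ℓ - 1 : ℕ) : ℝ≥0∞) * 2^ℓ) := by
    have h := (Nat.cast_le (α := ℝ≥0∞)).mpr hnat
    rw [Nat.cast_mul, Nat.cast_mul, Nat.cast_mul, Nat.cast_pow] at h
    simpa only [Nat.cast_ofNat, ← hSdef] using h
  have h4 : (1/4 : ℝ≥0∞) * 4 = 1 := by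
    rw [one_div]; exact ENNReal.inv_mul_cancel (by norm_num) (by norm_num)
  have h2 : (1/2 : ℝ≥0∞)^ℓ * 2^ℓ = 1 := by
    rw [one_div, ← mul_pow, ENNReal.inv_mul_cancel (by norm_num) (by norm_num), one_pow]
  have e1 : (1/2 : ℝ≥0∞)^ℓ * S = ((1/2)^ℓ * (1/4)) * (4 * S) := by
    rw [show ((1/2 : ℝ≥0∞)^ℓ * (1/4)) * (4 * S) = (1/2)^ℓ * ((1/4) * 4) * S from by ring, h4,
      mul_one]
  have e2 : ((1/2 : ℝ≥0∞)^ℓ * (1/4)) * (3 * (((ℓ - 1 : ℕ) : ℝ≥0∞) * 2^ℓ))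
      = 3/4 * ((ℓ - 1 : ℕ) : ℝ≥0∞) := by
    rw [show ((1/2 : ℝ≥0∞)^ℓ * (1/4)) * (3 * (((ℓ - 1 : ℕ) : ℝ≥0∞) * 2^ℓ))
        = ((1/2)^ℓ * 2^ℓ) * ((3 * (1/4)) * ((ℓ - 1 : ℕ) : ℝ≥0∞)) from by ring, h2, one_mul,
      show (3 : ℝ≥0∞) * (1/4) = 3/4 from by rw [one_div, div_eq_mul_inv]]
  calc (1/2 : ℝ≥0∞)^ℓ * S = ((1/2)^ℓ * (1/4)) * (4 * S) := e1
    _ ≤ ((1/2)^ℓ * (1/4)) * (3 * (((ℓ - 1 : ℕ) : ℝ≥0∞) * 2^ℓ)) := mul_le_mul_right h4S _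
    _ = 3/4 * ((ℓ - 1 : ℕ) : ℝ≥0∞) := e2

/-- Markov chain model of the `LeaderElection` protocol. The step from
state `ℓ` is the law of `(if B ≥ 1 then B else ℓ)` where `B` is binomial with `ℓ` trials and
success probability `1/2`. Started from a point mass at `ℓ₀` with `1 ≤ ℓ₀ ≤ n`, the chain law
`μ_t` satisfies `μ_t({1}) ≥ 1 - n·(3/4)^t` for every `t`; in particular for every `c > 0` and
every `t ≥ (c+1)·ln n / ln(4/3)` we get `μ_t({1}) ≥ 1 - n^(-c)`. -/
theorem stmt3 (n ℓ₀ : ℕ) (hn : 1 ≤ n) (hℓ₀ : 1 ≤ ℓ₀) (hℓ₀n : ℓ₀ ≤ n)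
    (step : ℕ → PMF ℕ)
    (hstep : ∀ ℓ, step ℓ =
      (PMF.binomial (1 / 2) (by norm_num) ℓ).map
        (fun b : Fin (ℓ + 1) => if 1 ≤ (b : ℕ) then (b : ℕ) else ℓ))
    (μ : ℕ → PMF ℕ) (hμ0 : μ 0 = PMF.pure ℓ₀) (hμs : ∀ t, μ (t + 1) = (μ t).bind step) :
    (∀ t : ℕ, 1 - (n : ℝ) * (3 / 4) ^ t ≤ ((μ t) 1).toReal) ∧
    (∀ c : ℝ, 0 < c → ∀ t : ℕ,
      (c + 1) * Real.log n / Real.log (4 / 3) ≤ (t : ℝ) →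
      1 - (n : ℝ) ^ (-c) ≤ ((μ t) 1).toReal) := by
  set φ : ℕ → ℝ≥0∞ := fun m => ((m - 1 : ℕ) : ℝ≥0∞) with hφ
  -- the step from a state ≥ 1 never reaches 0
  have hstep0 : ∀ ℓ : ℕ, 1 ≤ ℓ → step ℓ 0 = 0 := by
    intro ℓ hℓ
    rw [hstep ℓ, PMF.map_apply]
    refine ENNReal.tsum_eq_zero.mpr fun b => ?_
    rw [if_neg]
    split_ifs with h <;> omega
  -- the chain never sits at 0
  have hzero : ∀ t, μ t 0 = 0 := by
    intro t
    induction t with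
    | zero =>
      rw [hμ0, PMF.pure_apply, if_neg (by omega)]
    | succ t ih =>
      rw [hμs, PMF.bind_apply]
      refine ENNReal.tsum_eq_zero.mpr fun ℓ => ?_
      rcases Nat.eq_zero_or_pos ℓ with rfl | hℓ
      · rw [ih, zero_mul]
      · rw [hstep0 ℓ hℓ, mul_zero]
  -- one-step contraction of the potential
  have hΦstep : ∀ ℓ : ℕ, ∑' m, step ℓ m * φ m ≤ (3/4 : ℝ≥0∞) * φ ℓ := by
    intro ℓ
    rw [hstep ℓ, le3_tsum_map_mul]
    exact le3_stepBoundE ℓ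
  -- potential bound by induction
  have hΦ : ∀ t, ∑' m, μ t m * φ m ≤ ((ℓ₀ - 1 : ℕ) : ℝ≥0∞) * (3/4 : ℝ≥0∞)^t := by
    intro t
    induction t with
    | zero =>
      rw [hμ0, pow_zero, mul_one]
      rw [tsum_eq_single ℓ₀ (by intro m hm; rw [PMF.pure_apply, if_neg hm, zero_mul])]
      rw [PMF.pure_apply, if_pos rfl, one_mul]
    | succ t ih =>
      rw [hμs, le3_tsum_bind_mul]
      calc ∑' ℓ, μ t ℓ * ∑' m, step ℓ m * φ m
          ≤ ∑' ℓ, μ t ℓ * ((3/4 : ℝ≥0∞) * φ ℓ) :=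
            ENNReal.tsum_le_tsum fun ℓ => mul_le_mul_right (hΦstep ℓ) _
        _ = (3/4 : ℝ≥0∞) * ∑' ℓ, μ t ℓ * φ ℓ := by
            simp_rw [mul_left_comm]
            exact ENNReal.tsum_mul_left
        _ ≤ (3/4 : ℝ≥0∞) * (((ℓ₀ - 1 : ℕ) : ℝ≥0∞) * (3/4 : ℝ≥0∞)^t) := mul_le_mul_right ih _
        _ = ((ℓ₀ - 1 : ℕ) : ℝ≥0∞) * (3/4 : ℝ≥0∞)^(t + 1) := by ring
  -- Markov-type bound
  have hmain : ∀ t, (1 : ℝ≥0∞) ≤ μ t 1 + ∑' m, μ t m * φ m := by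
    intro t
    conv_lhs => rw [← (μ t).tsum_coe]
    have hle : ∀ m : ℕ, μ t m ≤ (if m = 1 then μ t 1 else 0) + μ t m * φ m := by
      intro m
      match m with
      | 0 => rw [hzero t]; simp
      | 1 => simp
      | (k + 2) =>
        rw [if_neg (by omega)]
        refine le_add_of_nonneg_of_le zero_le ?_
        have h1φ : (1 : ℝ≥0∞) ≤ φ (k + 2) := by
          show (1 : ℝ≥0∞) ≤ ((k + 2 - 1 : ℕ) : ℝ≥0∞)
          exact_mod_cast (by omega : 1 ≤ k + 2 - 1)
        calc μ t (k + 2) = μ t (k + 2) * 1 := (mul_one _).symm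
          _ ≤ μ t (k + 2) * φ (k + 2) := mul_le_mul_right h1φ _
    calc ∑' m, μ t m ≤ ∑' m, ((if m = 1 then μ t 1 else 0) + μ t m * φ m) :=
          ENNReal.tsum_le_tsum hle
      _ = (∑' m, (if m = 1 then μ t 1 else 0)) + ∑' m, μ t m * φ m := ENNReal.tsum_add
      _ = μ t 1 + ∑' m, μ t m * φ m := by
          rw [tsum_eq_single 1 (by intro m hm; rw [if_neg hm]), if_pos rfl]
  -- Part 1
  have part1 : ∀ t : ℕ, 1 - (n : ℝ) * (3 / 4) ^ t ≤ ((μ t) 1).toReal := by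
    intro t
    have hNne : (((ℓ₀ - 1 : ℕ) : ℝ≥0∞) * (3/4 : ℝ≥0∞)^t) ≠ ∞ :=
      ENNReal.mul_ne_top (ENNReal.natCast_ne_top _)
        (ENNReal.pow_ne_top (by simp [ENNReal.div_eq_top]))
    have hfin : (∑' m, μ t m * φ m) ≠ ∞ := ne_top_of_le_ne_top hNne (hΦ t)
    have h1 : (1 : ℝ) ≤ ((μ t) 1).toReal + (∑' m, μ t m * φ m).toReal := by
      have := ENNReal.toReal_mono (by
        exact ENNReal.add_ne_top.mpr ⟨PMF.apply_ne_top _ _, hfin⟩) (hmain t)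
      rwa [ENNReal.toReal_one, ENNReal.toReal_add (PMF.apply_ne_top _ _) hfin] at this
    have h2 : (∑' m, μ t m * φ m).toReal ≤ ((ℓ₀ - 1 : ℕ) : ℝ) * (3 / 4 : ℝ)^t := by
      have := ENNReal.toReal_mono hNne (hΦ t)
      rwa [ENNReal.toReal_mul, ENNReal.toReal_pow, ENNReal.toReal_natCast,
        show ((3/4 : ℝ≥0∞)).toReal = (3/4 : ℝ) from by
          rw [ENNReal.toReal_div]; norm_num] at this
    have h3 : ((ℓ₀ - 1 : ℕ) : ℝ) * (3 / 4 : ℝ)^t ≤ (n : ℝ) * (3 / 4) ^ t := by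
      refine mul_le_mul_of_nonneg_right ?_ (by positivity)
      exact_mod_cast Nat.le_of_lt_succ (by omega)
    linarith
  refine ⟨part1, fun c hc t ht => ?_⟩
  -- Part 2
  have hkey : (n : ℝ) * (3 / 4) ^ t ≤ (n : ℝ) ^ (-c) := by
    rcases eq_or_lt_of_le hn with h1 | h2
    · rw [← h1]
      push_cast
      rw [Real.one_rpow, one_mul]
      exact pow_le_one₀ (by norm_num) (by norm_num)
    · have hn2 : (2 : ℕ) ≤ n := h2
      have hnpos : (0 : ℝ) < n := by positivity
      have hlogn : 0 < Real.log n := Real.log_pos (by exact_mod_cast h2)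
      have hlog43 : 0 < Real.log (4 / 3) := Real.log_pos (by norm_num)
      have ht' : (c + 1) * Real.log n ≤ t * Real.log (4 / 3) := by
        rw [div_le_iff₀ hlog43] at ht
        linarith
      have e34 : ((3 : ℝ) / 4) ^ t = Real.exp (Real.log (3/4) * t) := by
        rw [← Real.rpow_natCast (3/4 : ℝ) t, Real.rpow_def_of_pos (by norm_num)]
      have elog : Real.log (3/4 : ℝ) = - Real.log (4/3) := by
        rw [show (3/4 : ℝ) = (4/3 : ℝ)⁻¹ from by norm_num, Real.log_inv]
      have en : (n : ℝ) = Real.exp (Real.log n) := (Real.exp_log hnpos).symm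
      have ern : (n : ℝ) ^ (-c) = Real.exp (Real.log n * (-c)) :=
        Real.rpow_def_of_pos hnpos (-c)
      rw [e34, ern]
      conv_lhs => rw [en]
      rw [← Real.exp_add]
      refine Real.exp_le_exp.mpr ?_
      rw [elog]
      nlinarith
  linarith [part1 t]
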